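/- Let φ : ℝ → ℝ be slope-restricted in [α, β] with 0 ≤ α ≤ β, applied entrywise as Φ : ℝᵐ → ℝᵐ, and let h(x) = H x + G Φ(W x) with matrices H ∈ ℝ^{p×n}, G ∈ ℝ^{p×m}, W ∈ ℝ^{m×n}. Then h is Lipschitz in ℓ₂ norm with constant L_LT = ‖H + ((α+β)/2) G W‖₂ + ((β−α)/2)·‖G‖₂·‖W‖₂, and moreover L_LT ≤ L_naive := ‖H‖₂ + β·‖G‖₂·‖W‖₂. -/

import Mathlib

/-- Spectral norm (ℓ₂ operator norm) of a matrix. -/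
noncomputable def specNorm {p n : ℕ} (M : Matrix (Fin p) (Fin n) ℝ) : ℝ :=
  ‖LinearMap.toContinuousLinearMap (Matrix.toEuclideanLin M)‖

/-- View a plain vector as an element of Euclidean space. -/
def eu {n : ℕ} (v : Fin n → ℝ) : EuclideanSpace ℝ (Fin n) := WithLp.toLp 2 v

lemma specNorm_nonneg {p n : ℕ} (M : Matrix (Fin p) (Fin n) ℝ) : 0 ≤ specNorm M :=
  norm_nonneg _

lemma eu_mulVec_norm_le {p n : ℕ} (M : Matrix (Fin p) (Fin n) ℝ) (v : Fin n → ℝ) :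
    ‖eu (M.mulVec v)‖ ≤ specNorm M * ‖eu v‖ := by
  have := (LinearMap.toContinuousLinearMap (Matrix.toEuclideanLin M)).le_opNorm (eu v)
  have heq : (LinearMap.toContinuousLinearMap (Matrix.toEuclideanLin M)) (eu v)
      = eu (M.mulVec v) := by
    simp [Matrix.toEuclideanLin, eu]
  rw [heq] at this
  exact this

lemma specNorm_add_le {p n : ℕ} (A B : Matrix (Fin p) (Fin n) ℝ) :
    specNorm (A + B) ≤ specNorm A + specNorm B := by
  have : Matrix.toEuclideanLin (A + B) = Matrix.toEuclideanLin A + Matrix.toEuclideanLin B :=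
    map_add _ _ _
  simp only [specNorm, this, map_add]
  exact norm_add_le _ _

lemma specNorm_smul_le {p n : ℕ} (c : ℝ) (hc : 0 ≤ c) (A : Matrix (Fin p) (Fin n) ℝ) :
    specNorm (c • A) ≤ c * specNorm A := by
  have : Matrix.toEuclideanLin (c • A) = c • Matrix.toEuclideanLin A := map_smul _ _ _
  simp only [specNorm, this, map_smul]
  calc ‖c • LinearMap.toContinuousLinearMap (Matrix.toEuclideanLin A)‖
      ≤ ‖c‖ * ‖LinearMap.toContinuousLinearMap (Matrix.toEuclideanLin A)‖ :=
        ContinuousLinearMap.opNorm_smul_le c _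
    _ = c * _ := by rw [Real.norm_eq_abs, abs_of_nonneg hc]

lemma specNorm_mul_le {p m n : ℕ} (A : Matrix (Fin p) (Fin m) ℝ) (B : Matrix (Fin m) (Fin n) ℝ) :
    specNorm (A * B) ≤ specNorm A * specNorm B := by
  have h : LinearMap.toContinuousLinearMap (Matrix.toEuclideanLin (A * B)) =
      (LinearMap.toContinuousLinearMap (Matrix.toEuclideanLin A)).comp
      (LinearMap.toContinuousLinearMap (Matrix.toEuclideanLin B)) := by
    ext x
    simp [Matrix.toEuclideanLin, Matrix.mulVec_mulVec]
  rw [specNorm, h]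
  exact ContinuousLinearMap.opNorm_comp_le _ _

lemma slope_center (φ : ℝ → ℝ) (α β : ℝ) (hαβ : α ≤ β)
    (hslope : ∀ a b : ℝ, a ≠ b → α ≤ (φ a - φ b) / (a - b) ∧ (φ a - φ b) / (a - b) ≤ β)
    (a b : ℝ) :
    |φ a - φ b - (α + β) / 2 * (a - b)| ≤ (β - α) / 2 * |a - b| := by
  by_cases hab : a = b
  · simp [hab]
  · obtain ⟨h1, h2⟩ := hslope a b hab
    set s := (φ a - φ b) / (a - b) with hs
    have hne : a - b ≠ 0 := sub_ne_zero.mpr hab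
    have hval : φ a - φ b = s * (a - b) := by rw [hs, div_mul_cancel₀ _ hne]
    have : φ a - φ b - (α + β) / 2 * (a - b) = (s - (α + β) / 2) * (a - b) := by
      rw [hval]; ring
    rw [this, abs_mul]
    apply mul_le_mul_of_nonneg_right _ (abs_nonneg _)
    rw [abs_le]
    constructor <;> linarith

lemma eu_norm_mono {m : ℕ} (u w : Fin m → ℝ) (h : ∀ i, |u i| ≤ |w i|) :
    ‖eu u‖ ≤ ‖eu w‖ := by
  rw [show ‖eu u‖ = Real.sqrt (∑ i, ‖u i‖ ^ 2) from EuclideanSpace.norm_eq (eu u),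
    show ‖eu w‖ = Real.sqrt (∑ i, ‖w i‖ ^ 2) from EuclideanSpace.norm_eq (eu w)]
  apply Real.sqrt_le_sqrt
  apply Finset.sum_le_sum
  intro i _
  rw [Real.norm_eq_abs, Real.norm_eq_abs]
  exact pow_le_pow_left₀ (abs_nonneg _) (h i) 2

/-- Loop-transformed Lipschitz bound for a residual layer `h(x) = Hx + GΦ(Wx)`,
and its improvement over the naive bound. -/
theorem loop_transform_layer_bound {n m p : ℕ} (φ : ℝ → ℝ) (α β : ℝ)
    (hα : 0 ≤ α) (hαβ : α ≤ β)
    (hslope : ∀ a b : ℝ, a ≠ b → α ≤ (φ a - φ b) / (a - b) ∧ (φ a - φ b) / (a - b) ≤ β)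
    (H : Matrix (Fin p) (Fin n) ℝ) (G : Matrix (Fin p) (Fin m) ℝ)
    (W : Matrix (Fin m) (Fin n) ℝ) :
    (∀ x x' : EuclideanSpace ℝ (Fin n),
      ‖eu (H.mulVec x + G.mulVec (fun i => φ (W.mulVec x i))) -
        eu (H.mulVec x' + G.mulVec (fun i => φ (W.mulVec x' i)))‖ ≤
      (specNorm (H + ((α + β) / 2) • (G * W)) + (β - α) / 2 * specNorm G * specNorm W) *
        ‖x - x'‖) ∧
    specNorm (H + ((α + β) / 2) • (G * W)) + (β - α) / 2 * specNorm G * specNorm W ≤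
      specNorm H + β * specNorm G * specNorm W := by
  set c : ℝ := (α + β) / 2 with hc
  set r : ℝ := (β - α) / 2 with hr
  have hr0 : 0 ≤ r := by rw [hr]; linarith
  have hc0 : 0 ≤ c := by rw [hc]; linarith
  constructor
  · intro x x'
    set d : Fin n → ℝ := (x : Fin n → ℝ) - (x' : Fin n → ℝ) with hd
    set u : Fin m → ℝ := fun i =>
      φ (W.mulVec x i) - φ (W.mulVec x' i) - c * (W.mulVec d i) with hu
    have hdecomp :
        eu (H.mulVec x + G.mulVec (fun i => φ (W.mulVec x i))) -
          eu (H.mulVec x' + G.mulVec (fun i => φ (W.mulVec x' i))) =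
        eu ((H + c • (G * W)).mulVec d) + eu (G.mulVec u) := by
      have h1 : (H + c • (G * W)).mulVec d
          = H.mulVec d + c • G.mulVec (W.mulVec d) := by
        rw [Matrix.add_mulVec, Matrix.smul_mulVec, ← Matrix.mulVec_mulVec]
      have h2 : G.mulVec u =
          G.mulVec ((fun i => φ (W.mulVec x i)) - (fun i => φ (W.mulVec x' i)))
            - c • G.mulVec (W.mulVec d) := by
        rw [← Matrix.mulVec_smul, ← Matrix.mulVec_sub]
        rfl
      have key : ((H.mulVec x + G.mulVec fun i => φ (W.mulVec x i)) -
          (H.mulVec x' + G.mulVec fun i => φ (W.mulVec x' i)))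
          = (H + c • (G * W)).mulVec d + G.mulVec u := by
        have hHd : H.mulVec d = H.mulVec x - H.mulVec x' := Matrix.mulVec_sub H x x'
        rw [h1, h2, hHd, Matrix.mulVec_sub G]
        abel
      exact congrArg eu key
    rw [hdecomp]
    have hWd : ‖eu (W.mulVec d)‖ ≤ specNorm W * ‖x - x'‖ := by
      have := eu_mulVec_norm_le W d
      exact this
    have hu_bound : ‖eu u‖ ≤ r * (specNorm W * ‖x - x'‖) := by
      have h1 : ‖eu u‖ ≤ ‖eu (r • W.mulVec d)‖ := by
        apply eu_norm_mono
        intro i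
        have := slope_center φ α β hαβ hslope (W.mulVec x i) (W.mulVec x' i)
        have hWdi : W.mulVec d i = W.mulVec x i - W.mulVec x' i := by
          rw [hd, Matrix.mulVec_sub]; rfl
        simp only [hu, Pi.smul_apply, smul_eq_mul, abs_mul, abs_of_nonneg hr0, hWdi]
        calc |φ (W.mulVec x i) - φ (W.mulVec x' i) - c * (W.mulVec x i - W.mulVec x' i)|
            ≤ r * |W.mulVec x i - W.mulVec x' i| := this
          _ = r * |W.mulVec x i - W.mulVec x' i| := rfl
      have h2 : ‖eu (r • W.mulVec d)‖ = r * ‖eu (W.mulVec d)‖ := by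
        show ‖r • eu (W.mulVec d)‖ = _
        rw [norm_smul, Real.norm_eq_abs, abs_of_nonneg hr0]
      calc ‖eu u‖ ≤ r * ‖eu (W.mulVec d)‖ := h2 ▸ h1
        _ ≤ r * (specNorm W * ‖x - x'‖) := by
            apply mul_le_mul_of_nonneg_left hWd hr0
    calc ‖eu ((H + c • (G * W)).mulVec d) + eu (G.mulVec u)‖
        ≤ ‖eu ((H + c • (G * W)).mulVec d)‖ + ‖eu (G.mulVec u)‖ := norm_add_le _ _
      _ ≤ specNorm (H + c • (G * W)) * ‖eu d‖ + specNorm G * ‖eu u‖ := by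
          gcongr <;> [exact eu_mulVec_norm_le _ _; exact eu_mulVec_norm_le _ _]
      _ ≤ specNorm (H + c • (G * W)) * ‖x - x'‖ +
            specNorm G * (r * (specNorm W * ‖x - x'‖)) := by
          gcongr
          · exact specNorm_nonneg _
          · exact le_of_eq rfl
          · exact specNorm_nonneg _
      _ = (specNorm (H + c • (G * W)) + r * specNorm G * specNorm W) * ‖x - x'‖ := by
          ring
  · have h1 : specNorm (H + c • (G * W)) ≤ specNorm H + c * (specNorm G * specNorm W) := by
      calc specNorm (H + c • (G * W)) ≤ specNorm H + specNorm (c • (G * W)) :=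
            specNorm_add_le _ _
        _ ≤ specNorm H + c * specNorm (G * W) := by
            gcongr; exact specNorm_smul_le c hc0 _
        _ ≤ specNorm H + c * (specNorm G * specNorm W) := by
            gcongr
            exact specNorm_mul_le _ _
    have hGW : 0 ≤ specNorm G * specNorm W :=
      mul_nonneg (specNorm_nonneg _) (specNorm_nonneg _)
    nlinarith [h1]
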